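/- Let (a_0,…,a_{k−1}) be positive integers summing to m with k ≥ 3, and suppose max_i a_i − min_i a_i ≥ 2. Then there exist indices i ≠ j such that replacing a_i by a_i − 1 and a_j by a_j + 1 strictly increases Σ_t sin(2π·a_t/m). -/
import Mathlib


open Real

lemma key_sin_ineq (m A B : ℝ) (hB : 1 ≤ B) (hAB : B + 2 ≤ A) (hsum : A + B + 1 ≤ m) :
    sin (2 * π * A / m) + sin (2 * π * B / m) <
      sin (2 * π * (A - 1) / m) + sin (2 * π * (B + 1) / m) := by
  have hm : (0:ℝ) < m := by nlinarith
  have hpi := Real.pi_pos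
  have e1 : 2*π*A/m = π*(A+B)/m + π*(A-B)/m := by field_simp; ring
  have e2 : 2*π*B/m = π*(A+B)/m - π*(A-B)/m := by field_simp; ring
  have e3 : 2*π*(A-1)/m = π*(A+B)/m + π*(A-B-2)/m := by field_simp; ring
  have e4 : 2*π*(B+1)/m = π*(A+B)/m - π*(A-B-2)/m := by field_simp; ring
  rw [e1, e2, e3, e4, Real.sin_add, Real.sin_sub, Real.sin_add, Real.sin_sub]
  have hu : 0 < Real.sin (π*(A+B)/m) := by
    apply Real.sin_pos_of_pos_of_lt_pi
    · apply div_pos ?_ hm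
      nlinarith
    · rw [div_lt_iff₀ hm]
      nlinarith
  have hc : Real.cos (π*(A-B)/m) < Real.cos (π*(A-B-2)/m) := by
    apply Real.cos_lt_cos_of_nonneg_of_le_pi
    · have : 0 ≤ A - B - 2 := by linarith
      positivity
    · rw [div_le_iff₀ hm]
      nlinarith
    · rw [div_lt_div_iff₀ hm hm]
      nlinarith
  nlinarith [mul_lt_mul_of_pos_left hc hu]

theorem stmt_5 (m k : ℕ) (hk : 3 ≤ k)
    (a : Fin k → ℕ) (hpos : ∀ i, 0 < a i) (hsum : ∑ i, a i = m)
    (hgap : ∃ i j, a j + 2 ≤ a i) :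
    ∃ i j, i ≠ j ∧
      ∑ t, sin (2 * π * a t / m) <
        ∑ t, sin (2 * π *
          (Function.update (Function.update a i (a i - 1)) j (a j + 1) t) / m) := by
  obtain ⟨i, j, hij⟩ := hgap
  have hne : i ≠ j := by rintro rfl; omega
  refine ⟨i, j, hne, ?_⟩
  set b := Function.update (Function.update a i (a i - 1)) j (a j + 1) with hb
  have hji : j ∈ Finset.univ.erase i := Finset.mem_erase.mpr ⟨hne.symm, Finset.mem_univ j⟩
  have hij' : i ∈ Finset.univ.erase j := Finset.mem_erase.mpr ⟨hne, Finset.mem_univ i⟩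
  have split : ∀ {M : Type} [AddCommMonoid M] (f : Fin k → M),
      ∑ t, f t = f j + (f i + ∑ t ∈ (Finset.univ.erase j).erase i, f t) := by
    intro M _ f
    rw [← Finset.add_sum_erase _ f (Finset.mem_univ j), ← Finset.add_sum_erase _ f hij']
  have hbi : b i = a i - 1 := by
    rw [hb, Function.update_of_ne hne, Function.update_self]
  have hbj : b j = a j + 1 := by
    rw [hb, Function.update_self]
  have hbt : ∀ t, t ≠ i → t ≠ j → b t = a t := by
    intro t hti htj
    rw [hb, Function.update_of_ne htj, Function.update_of_ne hti]
  -- third index gives a i + a j + 1 ≤ m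
  have hm3 : a i + a j + 1 ≤ m := by
    have hcard : ((Finset.univ.erase j).erase i).Nonempty := by
      rw [← Finset.card_pos, Finset.card_erase_of_mem hij',
        Finset.card_erase_of_mem (Finset.mem_univ j)]
      simp only [Finset.card_univ, Fintype.card_fin]
      omega
    obtain ⟨t, ht⟩ := hcard
    have hle : a t ≤ ∑ s ∈ (Finset.univ.erase j).erase i, a s :=
      Finset.single_le_sum (fun s _ => Nat.zero_le _) ht
    have e := split a
    have := hpos t
    omega
  have h1 := split (fun t => sin (2 * π * a t / m))
  have h2 := split (fun t => sin (2 * π * b t / m))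
  rw [h1, h2]
  have hS : ∑ t ∈ (Finset.univ.erase j).erase i, sin (2 * π * b t / m)
      = ∑ t ∈ (Finset.univ.erase j).erase i, sin (2 * π * a t / m) := by
    apply Finset.sum_congr rfl
    intro t ht
    rw [hbt t (Finset.mem_erase.mp ht).1
      (Finset.mem_erase.mp (Finset.mem_erase.mp ht).2).1]
  rw [hS, hbi, hbj]
  have hcast : ((a i - 1 : ℕ) : ℝ) = (a i : ℝ) - 1 := by
    have := hpos i
    push_cast [Nat.cast_sub this]
    ring
  have hkey := key_sin_ineq (m:ℝ) (a i) (a j)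
    (by exact_mod_cast hpos j) (by exact_mod_cast hij) (by exact_mod_cast hm3)
  rw [hcast]
  push_cast
  linarith [hkey]
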